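/- Let Θ be a real normed vector space, T a finite type of trajectories, and H a positive integer horizon. Suppose: (i) for each trajectory τ and each time t ∈ {1,…,H} there is an information state s_t(τ) in a set S and an action a_t(τ) ∈ {0,1}; (ii) f : Θ → S → ℝ is a parametrized policy with 0 < f(θ,s) < 1 for all θ, s, and θ ↦ f(θ,s) differentiable for every s, and write π_θ(1|s) = f(θ,s), π_θ(0|s) = 1 − f(θ,s); (iii) p_θ(τ) = μ(τ) · ∏_{t=1}^{H} π_θ(a_t(τ)|s_t(τ)) with μ(τ) > 0 for every τ; (iv) the regularized per-trajectory loss is L_θ(τ) = ℓ(τ) − β · Σ_{t=1}^{H} J_θ(s_t(τ)), where ℓ : T → ℝ, β ∈ ℝ, and J_θ(s) = −π_θ(1|s)·log π_θ(1|s) − π_θ(0|s)·log π_θ(0|s). Then the Fréchet derivative in θ of the expected loss G(θ) = Σ_{τ∈T} p_θ(τ)·L_θ(τ) equals Σ_{τ∈T} p_θ(τ)·L_θ(τ)·Σ_{t=1}^{H} D_θ[log π_θ(a_t(τ)|s_t(τ))] + β · Σ_{τ∈T} p_θ(τ) · Σ_{t=1}^{H} ( log π_θ(1|s_t(τ)) ·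 D_θ[π_θ(1|s_t(τ))] + log π_θ(0|s_t(τ)) · D_θ[π_θ(0|s_t(τ))] ). -/

import Mathlib

/-- Theorem 3 of the paper (gradient of the entropy-regularized event-triggering
objective) on a finite trajectory space. -/
theorem stmt0
    {Θ : Type*} [NormedAddCommGroup Θ] [NormedSpace ℝ Θ]
    {T : Type*} [Fintype T] {S : Type*}
    (H : ℕ) (hH : 0 < H)
    (s : T → Fin H → S) (a : T → Fin H → Bool)
    (f : Θ → S → ℝ)
    (hf0 : ∀ θ x, 0 < f θ x) (hf1 : ∀ θ x, f θ x < 1)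
    (hfd : ∀ x, Differentiable ℝ (fun θ => f θ x))
    (π : Θ → Bool → S → ℝ)
    (hπ : ∀ θ b x, π θ b x = if b then f θ x else 1 - f θ x)
    (μ : T → ℝ) (hμ : ∀ τ, 0 < μ τ)
    (p : Θ → T → ℝ)
    (hp : ∀ θ τ, p θ τ = μ τ * ∏ t : Fin H, π θ (a τ t) (s τ t))
    (J : Θ → S → ℝ)
    (hJ : ∀ θ x, J θ x =
      -(π θ true x * Real.log (π θ true x)) - π θ false x * Real.log (π θ false x))
    (ℓ : T → ℝ) (β : ℝ)
    (L : Θ → T → ℝ)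
    (hL : ∀ θ τ, L θ τ = ℓ τ - β * ∑ t : Fin H, J θ (s τ t))
    (G : Θ → ℝ)
    (hG : ∀ θ, G θ = ∑ τ : T, p θ τ * L θ τ)
    (θ : Θ) :
    fderiv ℝ G θ =
      (∑ τ : T, (p θ τ * L θ τ) •
          ∑ t : Fin H, fderiv ℝ (fun θ' => Real.log (π θ' (a τ t) (s τ t))) θ)
        + β • ∑ τ : T, p θ τ •
            ∑ t : Fin H,
              (Real.log (π θ true (s τ t)) • fderiv ℝ (fun θ' => π θ' true (s τ t)) θ
                + Real.log (π θ false (s τ t)) • fderiv ℝ (fun θ' => π θ' false (s τ t)) θ) := by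
  classical
  -- positivity of π
  have hπpos : ∀ θ' b x, 0 < π θ' b x := by
    intro θ' b x
    cases b
    · rw [hπ]; simp only [Bool.false_eq_true, if_false]; linarith [hf1 θ' x]
    · rw [hπ]; simpa using hf0 θ' x
  set Db : Bool → S → (Θ →L[ℝ] ℝ) := fun b x => fderiv ℝ (fun θ' => π θ' b x) θ with hDb
  have hπdiff : ∀ b x, Differentiable ℝ (fun θ' => π θ' b x) := by
    intro b x
    have h : (fun θ' => π θ' b x) = fun θ' => if b then f θ' x else 1 - f θ' x := by
      funext θ'; exact hπ θ' b x
    rw [h]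
    cases b
    · simpa using (differentiable_const (1:ℝ)).sub (hfd x)
    · simpa using hfd x
  have hπd : ∀ b x, HasFDerivAt (fun θ' => π θ' b x) (Db b x) θ :=
    fun b x => ((hπdiff b x) θ).hasFDerivAt
  have hlogd : ∀ b x, HasFDerivAt (fun θ' => Real.log (π θ' b x))
      ((π θ b x)⁻¹ • Db b x) θ :=
    fun b x => (hπd b x).log (ne_of_gt (hπpos θ b x))
  have hfderivlog : ∀ b x, fderiv ℝ (fun θ' => Real.log (π θ' b x)) θ
      = (π θ b x)⁻¹ • Db b x := fun b x => (hlogd b x).fderiv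
  -- Db true + Db false = 0
  have hfalse : ∀ x, Db false x = -Db true x := by
    intro x
    have h1 : HasFDerivAt (fun θ' => π θ' true x + π θ' false x)
        (Db true x + Db false x) θ := (hπd true x).add (hπd false x)
    have h2 : (fun θ' => π θ' true x + π θ' false x) = fun _ => (1:ℝ) := by
      funext θ'; rw [hπ, hπ]; simp
    rw [h2] at h1
    have h3 : Db true x + Db false x = 0 := h1.unique (hasFDerivAt_const (1:ℝ) θ)
    exact eq_neg_of_add_eq_zero_right h3
  -- derivative of π * log π
  have hm : ∀ b x, HasFDerivAt (fun θ' => π θ' b x * Real.log (π θ' b x))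
      (Db b x + Real.log (π θ b x) • Db b x) θ := by
    intro b x
    have h := (hπd b x).fun_mul (hlogd b x)
    convert h using 2
    case e'_8 => rfl
    case e'_9 => rfl
    rw [smul_smul, mul_inv_cancel₀ (ne_of_gt (hπpos θ b x)), one_smul]
  -- derivative of J
  have hJd : ∀ x, HasFDerivAt (fun θ' => J θ' x)
      (-(Real.log (π θ true x) • Db true x + Real.log (π θ false x) • Db false x)) θ := by
    intro x
    have h := ((hm true x).fun_neg).fun_sub (hm false x)
    have heq : (fun θ' => -(π θ' true x * Real.log (π θ' true x))
        - π θ' false x * Real.log (π θ' false x)) = fun θ' => J θ' x := by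
      funext θ'; rw [hJ]
    rw [heq] at h
    convert h using 1
    case e'_8 => rfl
    case e'_9 => rfl
    rw [hfalse x]
    simp only [smul_neg]
    abel
  -- derivative of L
  have hLd : ∀ τ, HasFDerivAt (fun θ' => L θ' τ)
      (β • ∑ t : Fin H,
        (Real.log (π θ true (s τ t)) • Db true (s τ t)
          + Real.log (π θ false (s τ t)) • Db false (s τ t))) θ := by
    intro τ
    have h1 : HasFDerivAt (fun θ' => ∑ t : Fin H, J θ' (s τ t))
        (∑ t : Fin H, -(Real.log (π θ true (s τ t)) • Db true (s τ t)
          + Real.log (π θ false (s τ t)) • Db false (s τ t))) θ :=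
      HasFDerivAt.fun_sum (fun t _ => hJd (s τ t))
    have h2 := h1.const_mul β
    have h3 := (hasFDerivAt_const (ℓ τ) θ).fun_sub h2
    have heq : (fun θ' => ℓ τ - β * ∑ t : Fin H, J θ' (s τ t)) = fun θ' => L θ' τ := by
      funext θ'; rw [hL]
    rw [heq] at h3
    convert h3 using 1
    case e'_8 => rfl
    case e'_9 => rfl
    rw [Finset.sum_neg_distrib, smul_neg]
    abel
  -- derivative of p
  have hpd : ∀ τ, HasFDerivAt (fun θ' => p θ' τ)
      ((p θ τ) • ∑ t : Fin H, (π θ (a τ t) (s τ t))⁻¹ • Db (a τ t) (s τ t)) θ := by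
    intro τ
    have hprod : HasFDerivAt (fun θ' => ∏ t : Fin H, π θ' (a τ t) (s τ t))
        (∑ t : Fin H, (∏ j ∈ Finset.univ.erase t, π θ (a τ j) (s τ j))
          • Db (a τ t) (s τ t)) θ :=
      HasFDerivAt.finset_prod (fun t _ => hπd (a τ t) (s τ t))
    have h2 := hprod.const_mul (μ τ)
    have heq : (fun θ' => μ τ * ∏ t : Fin H, π θ' (a τ t) (s τ t)) = fun θ' => p θ' τ := by
      funext θ'; rw [hp]
    rw [heq] at h2
    convert h2 using 1
    case e'_8 => rfl
    case e'_9 => rfl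
    rw [Finset.smul_sum, Finset.smul_sum]
    refine Finset.sum_congr rfl fun t _ => ?_
    rw [smul_smul, smul_smul]
    congr 1
    have hne : π θ (a τ t) (s τ t) ≠ 0 := ne_of_gt (hπpos θ (a τ t) (s τ t))
    rw [hp, ← Finset.mul_prod_erase _ _ (Finset.mem_univ t)]
    field_simp
  -- derivative of G
  have hGd : HasFDerivAt G
      (∑ τ : T, (p θ τ • (β • ∑ t : Fin H,
        (Real.log (π θ true (s τ t)) • Db true (s τ t)
          + Real.log (π θ false (s τ t)) • Db false (s τ t)))
        + L θ τ • ((p θ τ) • ∑ t : Fin H,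
            (π θ (a τ t) (s τ t))⁻¹ • Db (a τ t) (s τ t)))) θ := by
    have heq : G = fun θ' => ∑ τ : T, p θ' τ * L θ' τ := funext hG
    rw [heq]
    exact HasFDerivAt.fun_sum (fun τ _ => (hpd τ).fun_mul (hLd τ))
  rw [hGd.fderiv, Finset.sum_add_distrib]
  rw [add_comm]
  congr 1
  · refine Finset.sum_congr rfl fun τ _ => ?_
    rw [smul_smul, mul_comm (L θ τ) (p θ τ)]
    congr 1
    refine Finset.sum_congr rfl fun t _ => ?_
    rw [hfderivlog]
  · rw [Finset.smul_sum]
    refine Finset.sum_congr rfl fun τ _ => ?_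
    rw [smul_comm]
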